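/- Let N ≥ 2, 1 ≤ M < N, τ ∈ ℝ with τ ≠ 0. Let A := !![1, τ; 0, 1], β := ![τ²/2, τ] (2×1), C := !![1, 0], J := [0_{(N−M)×M}; I_M] ∈ Matrix (Fin N) (Fin M) ℝ, and let V ∈ Matrix (Fin (N−1)) (Fin N) ℝ have kernel equal to span{1_N}. Define 𝒜 := [[A⊗I_N, β⊗J], [0_{M×2N}, I_M]] ∈ Matrix (Fin (2N+M)) (Fin (2N+M)) ℝ and 𝒞 := [C⊗V, 0_{(N−1)×M}]. Then {v ∈ ℝ^{2N+M} : 𝒞·𝒜ᵏ·v = 0 for all k ∈ ℕ} equals the column space (range) of the (2N+M)×2 matrix [I₂⊗1_N; 0_{M×2}]; in particular the unobservable subspace of the pair (𝒜, 𝒞) is two-dimensional. -/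

import Mathlib

open Matrix Kronecker

lemma aux_mul_submatrix_id {l m n o : Type*} [Fintype m] (X : Matrix l m ℝ) (Y : Matrix m n ℝ)
    (e : o → n) : X * Y.submatrix id e = (X * Y).submatrix id e := by
  ext i j
  simp [Matrix.mul_apply]

/-- Equation (9) of the paper: the unobservable subspace of the mixed clock ensemble
`(𝒜, 𝒞)` equals the column space of `[I₂ ⊗ 1_N; 0]`, hence is two-dimensional. -/
theorem stmt_16 (N M : ℕ) (hN : 2 ≤ N) (hM : 1 ≤ M) (hMN : M < N)
    (τ : ℝ) (hτ : τ ≠ 0)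
    (A : Matrix (Fin 2) (Fin 2) ℝ) (hA : A = !![1, τ; 0, 1])
    (β : Matrix (Fin 2) (Fin 1) ℝ) (hβ : β = !![τ^2/2; τ])
    (C : Matrix (Fin 1) (Fin 2) ℝ) (hC : C = !![1, 0])
    (J : Matrix (Fin N) (Fin M) ℝ)
    (hJ : J = Matrix.of (fun i j => if i.val = N - M + j.val then 1 else 0))
    (V : Matrix (Fin (N-1)) (Fin N) ℝ)
    (hV : LinearMap.ker V.mulVecLin = Submodule.span ℝ {(fun _ => 1 : Fin N → ℝ)})
    (onecol : Matrix (Fin N) (Fin 1) ℝ) (honecol : onecol = Matrix.of (fun _ _ => 1))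
    (𝒜 : Matrix ((Fin 2 × Fin N) ⊕ Fin M) ((Fin 2 × Fin N) ⊕ Fin M) ℝ)
    (h𝒜 : 𝒜 = Matrix.fromBlocks
      (A ⊗ₖ (1 : Matrix (Fin N) (Fin N) ℝ))
      ((β ⊗ₖ J).submatrix id (fun j : Fin M => ((0 : Fin 1), j)))
      0 (1 : Matrix (Fin M) (Fin M) ℝ))
    (𝒞 : Matrix (Fin 1 × Fin (N-1)) ((Fin 2 × Fin N) ⊕ Fin M) ℝ)
    (h𝒞 : 𝒞 = Matrix.fromCols (C ⊗ₖ V) 0)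
    (Ψ : Matrix ((Fin 2 × Fin N) ⊕ Fin M) (Fin 2 × Fin 1) ℝ)
    (hΨ : Ψ = Matrix.fromRows ((1 : Matrix (Fin 2) (Fin 2) ℝ) ⊗ₖ onecol) 0) :
    {v : ((Fin 2 × Fin N) ⊕ Fin M) → ℝ | ∀ k : ℕ, (𝒞 * 𝒜 ^ k) *ᵥ v = 0} =
      (LinearMap.range Ψ.mulVecLin : Set (((Fin 2 × Fin N) ⊕ Fin M) → ℝ)) ∧
    Module.finrank ℝ (LinearMap.range Ψ.mulVecLin) = 2 := by
  -- basic facts about J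
  have hNM : 1 ≤ N - M := by omega
  have hJ0 : ∀ z : Fin M → ℝ, (J *ᵥ z) ⟨0, by omega⟩ = 0 := by
    intro z
    rw [hJ]
    simp only [Matrix.mulVec, dotProduct, Matrix.of_apply]
    apply Finset.sum_eq_zero
    intro m _
    have : ¬ ((0 : ℕ) = N - M + m.val) := by omega
    simp [this]
  have hJm : ∀ (z : Fin M → ℝ) (m : Fin M), (J *ᵥ z) ⟨N - M + m.val, by omega⟩ = z m := by
    intro z m
    rw [hJ]
    simp only [Matrix.mulVec, dotProduct, Matrix.of_apply]
    rw [Finset.sum_eq_single m]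
    · simp
    · intro m' _ hm'
      have : ¬ (N - M + m.val = N - M + m'.val) := by
        intro h; apply hm'; apply Fin.ext; omega
      simp [this, Fin.val_inj, Ne.symm hm']
    · intro h; exact absurd (Finset.mem_univ m) h
  -- the key product formula
  have key : ∀ k : ℕ, 𝒞 * 𝒜 ^ k =
      Matrix.fromCols (!![1, (k:ℝ)*τ] ⊗ₖ V)
        ((!![(k:ℝ)^2*τ^2/2] ⊗ₖ (V*J)).submatrix id (fun j : Fin M => ((0:Fin 1), j))) := by
    intro k
    induction k with
    | zero =>
      rw [pow_zero, Matrix.mul_one, h𝒞, hC]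
      have h1 : (!![1, ((0:ℕ):ℝ)*τ] : Matrix (Fin 1) (Fin 2) ℝ) = !![1, 0] := by
        norm_num
      have h2 : ((!![((0:ℕ):ℝ)^2*τ^2/2] ⊗ₖ (V*J)).submatrix id
          (fun j : Fin M => ((0:Fin 1), j))) = 0 := by
        ext pr j
        simp
      rw [h1, h2]
    | succ k ih =>
      have h1 : (!![1, (k:ℝ)*τ] : Matrix (Fin 1) (Fin 2) ℝ) * !![1, τ; 0, 1]
          = !![1, ((k+1:ℕ):ℝ)*τ] := by
        ext i j
        fin_cases i <;> fin_cases j <;>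
          simp [Matrix.mul_apply, Fin.sum_univ_two] <;> push_cast <;> ring
      have h2 : ((!![1, (k:ℝ)*τ] : Matrix (Fin 1) (Fin 2) ℝ) * !![τ^2/2; τ]
            + !![(k:ℝ)^2*τ^2/2]) = !![((k+1:ℕ):ℝ)^2*τ^2/2] := by
        ext i j
        fin_cases i <;> fin_cases j <;>
          simp [Matrix.mul_apply, Fin.sum_univ_two] <;> push_cast <;> ring
      have h3 : ∀ (P Q : Matrix (Fin 1) (Fin 1) ℝ),
          (P ⊗ₖ (V*J)).submatrix id (fun j : Fin M => ((0:Fin 1), j))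
            + (Q ⊗ₖ (V*J)).submatrix id (fun j : Fin M => ((0:Fin 1), j))
          = ((P + Q) ⊗ₖ (V*J)).submatrix id (fun j : Fin M => ((0:Fin 1), j)) := by
        intro P Q
        ext i j
        simp [Matrix.add_kronecker]
      rw [pow_succ, ← Matrix.mul_assoc, ih, h𝒜, Matrix.fromCols_mul_fromBlocks]
      rw [Matrix.mul_zero, add_zero, Matrix.mul_one]
      rw [← Matrix.mul_kronecker_mul, Matrix.mul_one, hA, h1]
      rw [aux_mul_submatrix_id, ← Matrix.mul_kronecker_mul, hβ, h3, h2]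
  -- the observability condition at step k
  have hcond : ∀ (v : ((Fin 2 × Fin N) ⊕ Fin M) → ℝ) (k : ℕ),
      ((𝒞 * 𝒜 ^ k) *ᵥ v = 0) ↔
        (fun j : Fin N => v (Sum.inl (0, j)) + ((k:ℝ)*τ) * v (Sum.inl (1, j))
          + ((k:ℝ)^2*τ^2/2) * (J *ᵥ (v ∘ Sum.inr)) j) ∈ LinearMap.ker V.mulVecLin := by
    intro v k
    rw [key k]
    have hv : v = Sum.elim (v ∘ Sum.inl) (v ∘ Sum.inr) := (Sum.elim_comp_inl_inr v).symm
    rw [LinearMap.mem_ker, Matrix.mulVecLin_apply]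
    conv_lhs => rw [hv]
    rw [Matrix.fromCols_mulVec_sumElim]
    have hentry : ∀ pr : Fin 1 × Fin (N-1),
        ((!![1, (k:ℝ)*τ] ⊗ₖ V) *ᵥ (v ∘ Sum.inl)
          + ((!![(k:ℝ)^2*τ^2/2] ⊗ₖ (V*J)).submatrix id (fun j : Fin M => ((0:Fin 1), j)))
            *ᵥ (v ∘ Sum.inr)) pr
        = (V *ᵥ (fun j : Fin N => v (Sum.inl (0, j)) + ((k:ℝ)*τ) * v (Sum.inl (1, j))
            + ((k:ℝ)^2*τ^2/2) * (J *ᵥ (v ∘ Sum.inr)) j)) pr.2 := by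
      rintro ⟨p, r⟩
      simp only [Pi.add_apply, Matrix.mulVec, dotProduct, Matrix.submatrix_apply,
        Matrix.kroneckerMap_apply, Fintype.sum_prod_type, Fin.sum_univ_two, Fin.sum_univ_one,
        Matrix.mul_apply, Function.comp_apply, id_eq]
      have hp : p = 0 := Subsingleton.elim p 0
      subst hp
      simp only [mul_add, Finset.sum_add_distrib]
      congr 1
      · congr 1
        · apply Finset.sum_congr rfl
          intro j _
          simp
          try ring
        · apply Finset.sum_congr rfl
          intro j _
          simp
          try ring
      · simp only [Finset.mul_sum, Finset.sum_mul]
        rw [Finset.sum_comm]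
        apply Finset.sum_congr rfl
        intro j _
        apply Finset.sum_congr rfl
        intro m _
        simp
        try ring
    constructor
    · intro h0
      funext r
      have := congrFun h0 ((0 : Fin 1), r)
      rw [hentry] at this
      exact this
    · intro h0
      funext pr
      rw [hentry pr]
      exact congrFun h0 pr.2
  -- action of Ψ
  have hΨv : ∀ w : Fin 2 × Fin 1 → ℝ, Ψ *ᵥ w
      = Sum.elim (fun pj : Fin 2 × Fin N => w (pj.1, 0)) 0 := by
    intro w
    rw [hΨ, Matrix.fromRows_mulVec, Matrix.zero_mulVec, honecol]
    have hmv : ((1 : Matrix (Fin 2) (Fin 2) ℝ)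
        ⊗ₖ (Matrix.of (fun _ _ => 1) : Matrix (Fin N) (Fin 1) ℝ)) *ᵥ w
        = (fun pj : Fin 2 × Fin N => w (pj.1, 0)) := by
      funext pj
      obtain ⟨p, j⟩ := pj
      simp only [Matrix.mulVec, dotProduct, Matrix.kroneckerMap_apply, Matrix.of_apply,
        Fintype.sum_prod_type, Fin.sum_univ_two, Fin.sum_univ_one, Matrix.one_apply, mul_one]
      fin_cases p <;> norm_num
    rw [hmv]
  have h1mem : (fun _ => 1 : Fin N → ℝ) ∈ LinearMap.ker V.mulVecLin := by
    rw [hV]; exact Submodule.mem_span_singleton_self _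
  constructor
  · ext v
    simp only [Set.mem_setOf_eq, SetLike.mem_coe, LinearMap.mem_range, Matrix.mulVecLin_apply]
    constructor
    · intro h
      have hy : ∀ k : ℕ, ∃ a : ℝ, ∀ j : Fin N,
          v (Sum.inl (0, j)) + ((k:ℝ)*τ) * v (Sum.inl (1, j))
            + ((k:ℝ)^2*τ^2/2) * (J *ᵥ (v ∘ Sum.inr)) j = a := by
        intro k
        have := (hcond v k).mp (h k)
        rw [hV, Submodule.mem_span_singleton] at this
        obtain ⟨a, ha⟩ := this
        refine ⟨a, fun j => ?_⟩
        have := congrFun ha.symm j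
        simpa using this
      obtain ⟨a, ha⟩ := hy 0
      obtain ⟨c, hc⟩ := hy 1
      obtain ⟨d, hd⟩ := hy 2
      norm_num at ha hc hd
      have ha' : ∀ j, v (Sum.inl (0, j)) = a := by
        intro j; have := ha j; linarith
      -- S j is constant
      have hS : ∀ j : Fin N, (J *ᵥ (v ∘ Sum.inr)) j = (d - 2*c + a) / (τ^2) := by
        intro j
        have h1 := hc j
        have h2 := hd j
        rw [ha' j] at h1 h2
        have hτ2 : τ^2 ≠ 0 := pow_ne_zero 2 hτ
        rw [eq_div_iff hτ2]
        linear_combination h2 - 2 * h1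
      have hS0 : (d - 2*c + a) / (τ^2) = 0 := by
        rw [← hS ⟨0, by omega⟩]
        exact hJ0 _
      have hSz : ∀ j : Fin N, (J *ᵥ (v ∘ Sum.inr)) j = 0 := fun j => (hS j).trans hS0
      have hx1 : ∀ j, v (Sum.inl (1, j)) = (c - a) / τ := by
        intro j
        have h1 := hc j
        rw [ha' j, hSz j] at h1
        rw [eq_div_iff hτ]
        linear_combination h1
      have hz : ∀ m : Fin M, v (Sum.inr m) = 0 := by
        intro m
        have := hSz ⟨N - M + m.val, by omega⟩
        rw [hJm (v ∘ Sum.inr) m] at this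
        exact this
      refine ⟨fun pr => if pr.1 = 0 then a else (c - a)/τ, ?_⟩
      rw [hΨv]
      funext i
      rcases i with ⟨p, j⟩ | m
      · simp only [Sum.elim_inl]
        fin_cases p
        · simp [ha' j]
        · simp [hx1 j]
      · simp [hz m]
    · rintro ⟨w, rfl⟩
      intro k
      rw [hcond, hΨv]
      have hzero : ((Sum.elim (fun pj : Fin 2 × Fin N => w (pj.1, 0)) (0 : Fin M → ℝ))
          ∘ Sum.inr) = (0 : Fin M → ℝ) := by funext m; simp
      have : (fun j : Fin N =>
          Sum.elim (fun pj : Fin 2 × Fin N => w (pj.1, 0)) (0 : Fin M → ℝ) (Sum.inl (0, j))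
            + ((k:ℝ)*τ) * Sum.elim (fun pj : Fin 2 × Fin N => w (pj.1, 0)) (0 : Fin M → ℝ)
              (Sum.inl (1, j))
            + ((k:ℝ)^2*τ^2/2) *
              (J *ᵥ ((Sum.elim (fun pj : Fin 2 × Fin N => w (pj.1, 0)) (0 : Fin M → ℝ))
                ∘ Sum.inr)) j)
          = (w (0, 0) + ((k:ℝ)*τ) * w (1, 0)) • (fun _ => 1 : Fin N → ℝ) := by
        funext j
        rw [hzero]
        simp [Matrix.mulVec_zero]
      rw [this]
      exact Submodule.smul_mem _ _ h1mem
  · have hinj : Function.Injective Ψ.mulVecLin := by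
      intro w w' hww
      funext pr
      obtain ⟨p, r⟩ := pr
      have := congrFun hww (Sum.inl (p, ⟨0, by omega⟩))
      simp only [Matrix.mulVecLin_apply, hΨv, Sum.elim_inl] at this
      have hr : r = 0 := Subsingleton.elim r 0
      rw [hr]
      exact this
    rw [LinearMap.finrank_range_of_inj hinj, Module.finrank_fintype_fun_eq_card]
    simp
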